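/- For every x in [0,1] and every n ≥ 1, x = s_n(x) + (-1)^n · T^n(x) / (d_1(x)···d_n(x)), where s_n(x) = Σ_{k=1}^n (-1)^{k+1}/(d_1(x)···d_k(x)), with the convention that terms with an infinite digit in the denominator are 0. -/

import Mathlib

open scoped BigOperators

/-- Reciprocal of an extended natural number as a real, with `1/∞ = 0`. -/
noncomputable def pinv (a : ℕ∞) : ℝ := ((a.toNat : ℕ) : ℝ)⁻¹

/-- First Pierce digit: `⌊1/x⌋` for `x ≠ 0`, and `∞` for `x = 0`. -/
noncomputable def pd1 (x : ℝ) : ℕ∞ := if x = 0 then ⊤ else (⌊x⁻¹⌋₊ : ℕ∞)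

/-- Pierce map `T(x) = 1 - ⌊1/x⌋ x` for `x ≠ 0`, `T(0) = 0`. -/
noncomputable def pT (x : ℝ) : ℝ := if x = 0 then 0 else 1 - (⌊x⁻¹⌋₊ : ℝ) * x

/-- `n`-th Pierce digit `d_n(x) = d_1(T^{n-1} x)` (for `n ≥ 1`). -/
noncomputable def pdig (n : ℕ) (x : ℝ) : ℕ∞ := pd1 (pT^[n-1] x)

/-- `1/(d_1(x) ⋯ d_n(x))`, with the convention that a factor `∞` makes it `0`. -/
noncomputable def pprodR (n : ℕ) (x : ℝ) : ℝ := ∏ k ∈ Finset.Icc 1 n, pinv (pdig k x)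

/-- `n`-th partial sum `s_n(x)` of the Pierce expansion of `x`. -/
noncomputable def psum (n : ℕ) (x : ℝ) : ℝ :=
  ∑ k ∈ Finset.Icc 1 n, (-1 : ℝ) ^ (k + 1) * pprodR k x

/-- The error-sum function of Pierce expansions `E(x) = Σ_{n≥1} (x - s_n(x))`. -/
noncomputable def pE (x : ℝ) : ℝ := ∑' n : ℕ, (x - psum (n + 1) x)

/-- A Pierce sequence (0-indexed: `σ k` is the paper's `σ_{k+1}`): terms are positive, strictly
increasing while finite, and once a term is `∞` all later terms are `∞`. -/
def IsPierce (σ : ℕ → ℕ∞) : Prop :=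
  1 ≤ σ 0 ∧ ∀ n, σ n < σ (n + 1) ∨ (σ n = ⊤ ∧ σ (n + 1) = ⊤)

/-- `n`-th partial sum `φ_n(σ)`. -/
noncomputable def pphiN (n : ℕ) (σ : ℕ → ℕ∞) : ℝ :=
  ∑ k ∈ Finset.range n, (-1 : ℝ) ^ k * ∏ i ∈ Finset.range (k + 1), pinv (σ i)

/-- `φ(σ) = Σ_{k≥1} (-1)^{k+1}/(σ_1 ⋯ σ_k)`. -/
noncomputable def pphi (σ : ℕ → ℕ∞) : ℝ :=
  ∑' k : ℕ, (-1 : ℝ) ^ k * ∏ i ∈ Finset.range (k + 1), pinv (σ i)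

/-- The error-sum function of Pierce sequences `E*(σ) = Σ_{n≥1} (φ(σ) - φ_n(σ))`. -/
noncomputable def pEstar (σ : ℕ → ℕ∞) : ℝ := ∑' n : ℕ, (pphi σ - pphiN (n + 1) σ)

/-- The series formula `Σ_{n≥1} (-1)^n n/(σ_1 ⋯ σ_{n+1})` for the error-sum of a sequence. -/
noncomputable def pEstarSeries (σ : ℕ → ℕ∞) : ℝ :=
  ∑' n : ℕ, (-1 : ℝ) ^ (n + 1) * (n + 1) * ∏ i ∈ Finset.range (n + 2), pinv (σ i)

/-- The metric `ρ(x,y) = 1/x + 1/y` for `x ≠ y` (with `1/∞ = 0`), `ρ(x,x) = 0`. -/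
noncomputable def prho (x y : ℕ∞) : ℝ := if x = y then 0 else pinv x + pinv y

/-- The metric `ρ^ℕ(σ,τ) = Σ_{n≥1} ρ(σ_n, τ_n)/n!` on sequences. -/
noncomputable def prhoN (σ τ : ℕ → ℕ∞) : ℝ :=
  ∑' n : ℕ, prho (σ n) (τ n) / ((n + 1).factorial : ℝ)


lemma pkey {y : ℝ} (hy : y ∈ Set.Icc (0:ℝ) 1) : y = (1 - pT y) * pinv (pd1 y) := by
  obtain ⟨h0, h1⟩ := hy
  rcases eq_or_lt_of_le h0 with h | h
  · simp [← h, pT, pd1, pinv]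
  · have hne : y ≠ 0 := ne_of_gt h
    have hinv : (1:ℝ) ≤ y⁻¹ := one_le_inv_iff₀.mpr ⟨h, h1⟩
    have hfl : 1 ≤ ⌊y⁻¹⌋₊ := Nat.le_floor (by exact_mod_cast hinv)
    have hflR : (0:ℝ) < (⌊y⁻¹⌋₊ : ℝ) := by exact_mod_cast hfl
    rw [pT, pd1, if_neg hne, if_neg hne]
    have : pinv (⌊y⁻¹⌋₊ : ℕ∞) = ((⌊y⁻¹⌋₊ : ℝ))⁻¹ := by simp [pinv]
    rw [this]
    field_simp
    rw [one_div]
    rw [eq_div_iff (ne_of_gt hflR)]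
    ring

lemma pT_mem {y : ℝ} (hy : y ∈ Set.Icc (0:ℝ) 1) : pT y ∈ Set.Icc (0:ℝ) 1 := by
  obtain ⟨h0, h1⟩ := hy
  rcases eq_or_lt_of_le h0 with h | h
  · simp [← h, pT]
  · have hne : y ≠ 0 := ne_of_gt h
    rw [pT, if_neg hne]
    constructor
    · have : (⌊y⁻¹⌋₊ : ℝ) ≤ y⁻¹ := Nat.floor_le (by positivity)
      have := mul_le_mul_of_nonneg_right this (le_of_lt h)
      rw [inv_mul_cancel₀ hne] at this
      linarith
    · have : (0:ℝ) ≤ (⌊y⁻¹⌋₊ : ℝ) * y := by positivity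
      linarith

lemma pT_iter_mem {x : ℝ} (hx : x ∈ Set.Icc (0:ℝ) 1) (n : ℕ) :
    pT^[n] x ∈ Set.Icc (0:ℝ) 1 := by
  induction n with
  | zero => simpa using hx
  | succ n ih => rw [Function.iterate_succ_apply']; exact pT_mem ih

lemma pprodR_succ (n : ℕ) (x : ℝ) :
    pprodR (n + 1) x = pprodR n x * pinv (pdig (n + 1) x) := by
  rw [pprodR, pprodR, Finset.prod_Icc_succ_top (Nat.le_add_left 1 n)]

lemma psum_succ (n : ℕ) (x : ℝ) :
    psum (n + 1) x = psum n x + (-1:ℝ) ^ (n + 2) * pprodR (n + 1) x := by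
  rw [psum, psum, Finset.sum_Icc_succ_top (Nat.le_add_left 1 n)]


theorem stmt2 (x : ℝ) (hx : x ∈ Set.Icc (0 : ℝ) 1) (n : ℕ) (hn : 1 ≤ n) :
    x = psum n x + (-1 : ℝ) ^ n * (pT^[n] x) * pprodR n x := by
  induction n with
  | zero => omega
  | succ m ih =>
    rcases Nat.eq_zero_or_pos m with hm | hm
    · subst hm
      have hkey := pkey hx
      simp only [psum, pprodR, Finset.Icc_self, Finset.sum_singleton, Finset.prod_singleton,
        pdig, pow_succ, pow_zero]
      simp only [Nat.sub_self, Function.iterate_zero_apply, Function.iterate_one]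
      conv_lhs => rw [hkey]
      rw [Function.iterate_one]
      ring
    · have hx' := ih hm
      have hmem := pT_iter_mem hx m
      have hkey := pkey hmem
      have hd : pd1 (pT^[m] x) = pdig (m + 1) x := by
        simp [pdig]
      have hT : pT (pT^[m] x) = pT^[m+1] x := by
        rw [Function.iterate_succ_apply']
      rw [hd, hT] at hkey
      rw [psum_succ, pprodR_succ]
      conv_lhs => rw [hx', hkey]
      ring
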